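/- arXiv:1905.01442 — 2 statements merged into one kernel-verified Lean document; each statement's English description precedes it below -/
import Mathlib

section
/- For K(x,t) = x/(2√π t^{3/2}) e^{−x²/(4t)} (t > 0) and any continuous P on [0,T], lim_{x → 0⁺} ∫₀ᵗ K(x, t−τ) P(τ) dτ = P(t) for each t ∈ (0,T]. -/
open Set intervalIntegral Real Filter

/-- The heat flux kernel `K(x,t) = x/(2√π t^{3/2}) e^{−x²/(4t)}` for `t > 0`, `K(x,0) = 0`. -/
noncomputable def K (x t : ℝ) : ℝ :=
  if 0 < t then x / (2 * Real.sqrt π * t ^ ((3:ℝ)/2)) * Real.exp (-x^2 / (4*t)) else 0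

lemma rpow32 {s : ℝ} (hs : 0 ≤ s) : s ^ ((3:ℝ)/2) = s * Real.sqrt s := by
  rw [show (3:ℝ)/2 = 1 + 1/2 by norm_num, Real.rpow_add' hs (by norm_num), Real.rpow_one,
    Real.sqrt_eq_rpow]

lemma K_nonneg {x : ℝ} (hx : 0 ≤ x) (s : ℝ) : 0 ≤ K x s := by
  unfold K
  split_ifs with h
  · positivity
  · exact le_rfl

lemma K_pos_eq {x s : ℝ} (hs : 0 < s) :
    K x s = x / (2 * Real.sqrt π * (s * Real.sqrt s)) * Real.exp (-x^2 / (4*s)) := by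
  rw [K, if_pos hs, rpow32 hs.le]

/-- Bound `K x s ≤ 32/(√π x³) √s`. -/
lemma exp_neg_le {y : ℝ} (hy : 0 < y) : Real.exp (-y) ≤ 4 / y^2 := by
  have h1 : y/2 + 1 ≤ Real.exp (y/2) := Real.add_one_le_exp _
  have h2 : y^2/4 ≤ Real.exp y := by
    rw [show y = y/2 + y/2 by ring, Real.exp_add]
    nlinarith [Real.exp_pos (y/2)]
  rw [Real.exp_neg]
  rw [show (4:ℝ)/y^2 = (y^2/4)⁻¹ by field_simp]
  exact inv_anti₀ (by positivity) h2

lemma K_le {x : ℝ} (hx : 0 < x) (s : ℝ) :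
    K x s ≤ 32 / (Real.sqrt π * x^3) * Real.sqrt s := by
  rcases le_or_gt s 0 with h | h
  · rw [K, if_neg (not_lt.2 h)]
    positivity
  · rw [K_pos_eq h]
    have hπ : 0 < Real.sqrt π := Real.sqrt_pos.2 Real.pi_pos
    have hss : 0 < Real.sqrt s := Real.sqrt_pos.2 h
    have hs2 : Real.sqrt s * Real.sqrt s = s := Real.mul_self_sqrt h.le
    have hy : 0 < x^2/(4*s) := by positivity
    have hexp : Real.exp (-x^2 / (4*s)) ≤ 64 * s^2 / x^4 := by
      have h4 := exp_neg_le hy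
      rw [neg_div]
      calc Real.exp (-(x^2/(4*s))) ≤ 4 / (x^2/(4*s))^2 := h4
        _ = 64 * s^2 / x^4 := by field_simp; ring
    calc x / (2 * Real.sqrt π * (s * Real.sqrt s)) * Real.exp (-x^2 / (4*s))
        ≤ x / (2 * Real.sqrt π * (s * Real.sqrt s)) * (64 * s^2 / x^4) :=
          mul_le_mul_of_nonneg_left hexp (by positivity)
      _ = 32 / (Real.sqrt π * x^3) * Real.sqrt s := by
          field_simp
          obtain ⟨r, hr⟩ : ∃ r, Real.sqrt s = r := ⟨_, rfl⟩
          rw [hr] at hs2 ⊢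
          rw [← hs2]
          ring

lemma K_continuousOn {x : ℝ} (hx : 0 < x) : ContinuousOn (K x) (Ici 0) := by
  intro s hs
  rcases eq_or_lt_of_le (mem_Ici.1 hs) with h | h
  · -- s = 0
    subst h
    have h0 : K x 0 = 0 := by rw [K, if_neg (lt_irrefl 0)]
    rw [ContinuousWithinAt, h0]
    apply tendsto_of_tendsto_of_tendsto_of_le_of_le (g := fun _ => (0:ℝ))
      (h := fun u => 32 / (Real.sqrt π * x^3) * Real.sqrt u)
    · exact tendsto_const_nhds
    · have : Tendsto (fun u => 32 / (Real.sqrt π * x^3) * Real.sqrt u) (nhds 0)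
          (nhds (32 / (Real.sqrt π * x^3) * Real.sqrt 0)) :=
        (continuous_const.mul Real.continuous_sqrt).tendsto 0
      simpa using this.mono_left nhdsWithin_le_nhds
    · exact fun u => K_nonneg hx.le u
    · exact fun u => K_le hx u
  · -- s > 0
    apply ContinuousAt.continuousWithinAt
    have hev : ∀ᶠ u in nhds s, K x u
        = x / (2 * Real.sqrt π * u ^ ((3:ℝ)/2)) * Real.exp (-x^2 / (4*u)) := by
      filter_upwards [eventually_gt_nhds h] with u hu
      rw [K, if_pos hu]
    have hc : ContinuousAt (fun u => x / (2 * Real.sqrt π * u ^ ((3:ℝ)/2))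
        * Real.exp (-x^2 / (4*u))) s := by
      have h1 : ContinuousAt (fun u : ℝ => u ^ ((3:ℝ)/2)) s :=
        Real.continuousAt_rpow_const s _ (Or.inl h.ne')
      have hne : 2 * Real.sqrt π * s ^ ((3:ℝ)/2) ≠ 0 := by
        have : (0:ℝ) < s ^ ((3:ℝ)/2) := Real.rpow_pos_of_pos h _
        have hπ : 0 < Real.sqrt π := Real.sqrt_pos.2 Real.pi_pos
        positivity
      have hne' : (4:ℝ) * s ≠ 0 := by positivity
      exact (continuousAt_const.div (continuousAt_const.mul h1) hne).mul
        (Real.continuous_exp.continuousAt.comp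
          (continuousAt_const.div (continuousAt_const.mul continuousAt_id) hne'))
    exact hc.congr (hev.mono fun u hu => hu.symm)

noncomputable def E (y : ℝ) : ℝ := ∫ u in (0:ℝ)..y, Real.exp (-u^2)

lemma E_hasDerivAt (y : ℝ) : HasDerivAt E (Real.exp (-y^2)) y := by
  refine intervalIntegral.integral_hasDerivAt_right ?_ ?_ ?_
  · exact (Continuous.intervalIntegrable (by continuity) _ _)
  · exact (Continuous.stronglyMeasurableAtFilter (by continuity) _ _)
  · exact (Continuous.continuousAt (by continuity))

lemma E_nonneg {y : ℝ} (hy : 0 ≤ y) : 0 ≤ E y :=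
  intervalIntegral.integral_nonneg hy (fun u _ => (Real.exp_pos _).le)

lemma E_le {y : ℝ} (hy : 0 ≤ y) : E y ≤ y := by
  have := intervalIntegral.norm_integral_le_of_norm_le_const
    (C := 1) (f := fun u : ℝ => Real.exp (-u^2)) (a := 0) (b := y) ?_
  · have h := (abs_le.1 (by simpa [abs_of_nonneg hy] using this)).2
    simpa [E] using h
  · intro u _
    rw [Real.norm_eq_abs, abs_of_pos (Real.exp_pos _)]
    exact Real.exp_le_one_iff.2 (neg_nonpos.2 (by positivity))

lemma E_tendsto : Tendsto E atTop (nhds (Real.sqrt π / 2)) := by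
  have hi : MeasureTheory.IntegrableOn (fun u : ℝ => Real.exp (-u^2)) (Ioi 0) := by
    have := (integrable_exp_neg_mul_sq (b := 1) one_pos).integrableOn (s := Ioi 0)
    simpa using this
  have := MeasureTheory.intervalIntegral_tendsto_integral_Ioi 0 hi tendsto_id
  have hg : (∫ u in Ioi (0:ℝ), Real.exp (-u^2)) = Real.sqrt π / 2 := by
    have := integral_gaussian_Ioi 1
    simpa using this
  rw [hg] at this
  exact this

/-- Antiderivative of `K x`. -/
noncomputable def F (x s : ℝ) : ℝ :=
  if s = 0 then -1 else -(2 / Real.sqrt π) * E (x / (2 * Real.sqrt s))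

lemma F_hasDerivAt {x s : ℝ} (hs : 0 < s) : HasDerivAt (F x) (K x s) s := by
  have hss : 0 < Real.sqrt s := Real.sqrt_pos.2 hs
  have hs2 : Real.sqrt s * Real.sqrt s = s := Real.mul_self_sqrt hs.le
  have hπ : 0 < Real.sqrt π := Real.sqrt_pos.2 Real.pi_pos
  have hsqrt : HasDerivAt (fun u : ℝ => Real.sqrt u) (1/(2*Real.sqrt s)) s :=
    Real.hasDerivAt_sqrt hs.ne'
  have h2 : HasDerivAt (fun u : ℝ => 2 * Real.sqrt u) (2 * (1/(2*Real.sqrt s))) s :=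
    hsqrt.const_mul 2
  have hinv : HasDerivAt (fun u : ℝ => (2 * Real.sqrt u)⁻¹)
      (-(2 * (1/(2*Real.sqrt s))) / (2 * Real.sqrt s)^2) s := h2.inv (by positivity)
  have hinner : HasDerivAt (fun u : ℝ => x / (2 * Real.sqrt u))
      (-(x / (4 * (s * Real.sqrt s)))) s := by
    have h3 := hinv.const_mul x
    have heq : (fun u : ℝ => x * (2 * Real.sqrt u)⁻¹) = fun u : ℝ => x / (2 * Real.sqrt u) := by
      funext u; rw [div_eq_mul_inv]
    rw [heq] at h3
    refine h3.congr_deriv (Eq.symm ?_)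
    field_simp
    obtain ⟨r, hr⟩ : ∃ r, Real.sqrt s = r := ⟨_, rfl⟩
    rw [hr] at hs2 ⊢
    rw [← hs2]
    ring
  have hE : HasDerivAt E (Real.exp (-(x / (2*Real.sqrt s))^2)) (x / (2*Real.sqrt s)) :=
    E_hasDerivAt _
  have hcomp : HasDerivAt (fun u => E (x / (2 * Real.sqrt u)))
      (Real.exp (-(x / (2*Real.sqrt s))^2) * (-(x / (4 * (s * Real.sqrt s))))) s :=
    HasDerivAt.comp (h₂ := E) s hE hinner
  have hmain : HasDerivAt (fun u => -(2 / Real.sqrt π) * E (x / (2 * Real.sqrt u)))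
      (K x s) s := by
    have := hcomp.const_mul (-(2 / Real.sqrt π))
    refine this.congr_deriv (Eq.symm ?_)
    rw [K_pos_eq hs]
    have hsq : (x / (2*Real.sqrt s))^2 = x^2 / (4*s) := by
      rw [div_pow, mul_pow, Real.sq_sqrt hs.le]
      norm_num
    rw [hsq]
    field_simp
    ring
  apply hmain.congr_of_eventuallyEq
  filter_upwards [eventually_ne_nhds hs.ne'] with u hu
  rw [F, if_neg hu]

lemma F_cont0 {x : ℝ} (hx : 0 < x) :
    Tendsto (F x) (nhdsWithin 0 (Ici 0)) (nhds (-1)) := by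
  have hπ : 0 < Real.sqrt π := Real.sqrt_pos.2 Real.pi_pos
  have h1 : Tendsto (F x) (nhdsWithin 0 (Ioi 0)) (nhds (-1)) := by
    have hsq : Tendsto (fun s : ℝ => 2 * Real.sqrt s) (nhdsWithin 0 (Ioi 0))
        (nhdsWithin 0 (Ioi 0)) := by
      apply tendsto_nhdsWithin_of_tendsto_nhds_of_eventually_within
      · have : Tendsto (fun s : ℝ => 2 * Real.sqrt s) (nhds 0) (nhds (2 * Real.sqrt 0)) :=
          (continuous_const.mul Real.continuous_sqrt).tendsto 0
        simpa using this.mono_left nhdsWithin_le_nhds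
      · filter_upwards [self_mem_nhdsWithin] with s hs
        have : 0 < Real.sqrt s := Real.sqrt_pos.2 hs
        simp only [mem_Ioi]; positivity
    have ht : Tendsto (fun s : ℝ => x / (2 * Real.sqrt s)) (nhdsWithin 0 (Ioi 0)) atTop := by
      have := (hsq.inv_tendsto_nhdsGT_zero).const_mul_atTop hx
      refine this.congr fun s => ?_
      rw [div_eq_mul_inv]; rfl
    have hE := E_tendsto.comp ht
    have hlim : Tendsto (fun s : ℝ => -(2 / Real.sqrt π) * E (x / (2 * Real.sqrt s)))
        (nhdsWithin 0 (Ioi 0)) (nhds (-(2 / Real.sqrt π) * (Real.sqrt π / 2))) :=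
      hE.const_mul _
    have heq : -(2 / Real.sqrt π) * (Real.sqrt π / 2) = -1 := by
      field_simp
    rw [heq] at hlim
    apply hlim.congr'
    filter_upwards [self_mem_nhdsWithin] with s hs
    rw [F, if_neg (ne_of_gt hs)]
  have hset : (Ici (0:ℝ)) = {0} ∪ Ioi 0 := by
    ext u; simp [le_iff_lt_or_eq, eq_comm, or_comm]
  rw [hset, nhdsWithin_union, tendsto_sup]
  constructor
  · rw [nhdsWithin_singleton]
    rw [tendsto_pure_left]
    intro s hs
    have h0 : F x 0 = -1 := by rw [F, if_pos rfl]
    rw [h0]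
    exact mem_of_mem_nhds hs
  · exact h1

lemma intK {x b : ℝ} (hx : 0 < x) (hb : 0 < b) :
    ∫ s in (0:ℝ)..b, K x s = 1 - (2 / Real.sqrt π) * E (x / (2 * Real.sqrt b)) := by
  have hcont : ContinuousOn (F x) (Icc 0 b) := by
    intro s hs
    rcases eq_or_lt_of_le hs.1 with h | h
    · subst h
      have : F x 0 = -1 := by rw [F, if_pos rfl]
      rw [ContinuousWithinAt, this]
      exact (F_cont0 hx).mono_left (nhdsWithin_mono 0 (Icc_subset_Ici_self))
    · exact (F_hasDerivAt h).continuousAt.continuousWithinAt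
  have hint : IntervalIntegrable (K x) MeasureTheory.volume 0 b := by
    apply ContinuousOn.intervalIntegrable
    rw [uIcc_of_le hb.le]
    exact (K_continuousOn hx).mono (Icc_subset_Ici_self)
  have h := intervalIntegral.integral_eq_sub_of_hasDeriv_right_of_le hb.le hcont
    (fun s hs => (F_hasDerivAt hs.1).hasDerivWithinAt) hint
  rw [h, F, F, if_neg hb.ne', if_pos rfl]
  ring

set_option maxHeartbeats 2000000 in
theorem K_delta_approx (T : ℝ) (hT : 0 < T) (P : ℝ → ℝ)
    (hP : ContinuousOn P (Set.Icc 0 T)) :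
    ∀ t ∈ Set.Ioc (0:ℝ) T,
      Tendsto (fun x => ∫ τ in (0:ℝ)..t, K x (t - τ) * P τ)
        (nhdsWithin 0 (Set.Ioi 0)) (nhds (P t)) := by
  intro t ht
  obtain ⟨ht0, htT⟩ := ht
  have key : ∀ x : ℝ, (∫ τ in (0:ℝ)..t, K x (t - τ) * P τ)
      = ∫ s in (0:ℝ)..t, K x s * P (t - s) := by
    intro x
    have h := intervalIntegral.integral_comp_sub_left
      (a := 0) (b := t) (fun s => K x s * P (t - s)) t
    simp only [sub_sub_cancel, sub_self, sub_zero] at h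
    exact h
  simp only [key]
  have hπ : 0 < Real.sqrt π := Real.sqrt_pos.2 Real.pi_pos
  obtain ⟨M0, hM0⟩ := isCompact_Icc.exists_bound_of_continuousOn hP
  set M := M0 + 1 with hMdef
  have hM0nn : 0 ≤ M0 := le_trans (norm_nonneg _) (hM0 0 ⟨le_refl 0, hT.le⟩)
  have hM : 0 < M := by linarith
  have hMb : ∀ τ ∈ Set.Icc (0:ℝ) T, |P τ| ≤ M := by
    intro τ hτ
    have := hM0 τ hτ
    rw [Real.norm_eq_abs] at this
    linarith
  rw [Metric.tendsto_nhdsWithin_nhds]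
  intro ε hε
  have hu := isCompact_Icc.uniformContinuousOn_of_continuous hP
  rw [Metric.uniformContinuousOn_iff] at hu
  obtain ⟨δ₀, hδ₀, hucont⟩ := hu (ε/4) (by positivity)
  set δ := min (δ₀/2) (t/2) with hδdef
  have hδpos : 0 < δ := lt_min (by linarith) (by linarith)
  have hδt : δ < t := lt_of_le_of_lt (min_le_right _ _) (by linarith)
  have hδδ₀ : δ < δ₀ := lt_of_le_of_lt (min_le_left _ _) (by linarith)
  have hδs : 0 < Real.sqrt δ := Real.sqrt_pos.2 hδpos
  have hts : 0 < Real.sqrt t := Real.sqrt_pos.2 ht0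
  set C₁ : ℝ := t * (2*M) / (2 * Real.sqrt π * (δ * Real.sqrt δ)) + 1 with hC₁def
  have hC₁pos : 0 < C₁ := by positivity
  set C₂ : ℝ := M / (Real.sqrt π * Real.sqrt t) with hC₂def
  have hC₂pos : 0 < C₂ := by positivity
  refine ⟨min (ε/4/C₁) (ε/4/C₂), lt_min (by positivity) (by positivity), ?_⟩
  intro x hx hxd
  rw [mem_Ioi] at hx
  rw [Real.dist_eq, sub_zero, abs_of_pos hx] at hxd
  have hx1 : x < ε/4/C₁ := lt_of_lt_of_le hxd (min_le_left _ _)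
  have hx2 : x < ε/4/C₂ := lt_of_lt_of_le hxd (min_le_right _ _)
  -- integrability
  have hKc : ContinuousOn (K x) (Set.Icc 0 t) := (K_continuousOn hx).mono Icc_subset_Ici_self
  have hPc : ContinuousOn (fun s => P (t - s)) (Set.Icc 0 t) := by
    apply hP.comp (continuous_const.sub continuous_id).continuousOn
    intro s hs
    exact ⟨by simp only [Pi.sub_apply]; simp; linarith [hs.2], by simp; linarith [hs.1]⟩
  have hintKP : IntervalIntegrable (fun s => K x s * P (t - s)) MeasureTheory.volume 0 t := by
    apply ContinuousOn.intervalIntegrable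
    rw [uIcc_of_le ht0.le]
    exact hKc.mul hPc
  have hintK : IntervalIntegrable (K x) MeasureTheory.volume 0 t := by
    apply ContinuousOn.intervalIntegrable
    rw [uIcc_of_le ht0.le]
    exact hKc
  have hintKd : IntervalIntegrable (K x) MeasureTheory.volume 0 δ :=
    hintK.mono_set (by rw [uIcc_of_le hδpos.le, uIcc_of_le ht0.le]
                       exact Icc_subset_Icc le_rfl hδt.le)
  have hintJ : IntervalIntegrable (fun s => K x s * (P (t - s) - P t))
      MeasureTheory.volume 0 t := by
    apply ContinuousOn.intervalIntegrable
    rw [uIcc_of_le ht0.le]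
    exact hKc.mul (hPc.sub continuousOn_const)
  have hintJ1 : IntervalIntegrable (fun s => K x s * (P (t - s) - P t))
      MeasureTheory.volume 0 δ :=
    hintJ.mono_set (by rw [uIcc_of_le hδpos.le, uIcc_of_le ht0.le]
                       exact Icc_subset_Icc le_rfl hδt.le)
  have hintJ2 : IntervalIntegrable (fun s => K x s * (P (t - s) - P t))
      MeasureTheory.volume δ t :=
    hintJ.mono_set (by rw [uIcc_of_le hδt.le, uIcc_of_le ht0.le]
                       exact Icc_subset_Icc hδpos.le le_rfl)
  -- decomposition
  have hdecomp : (∫ s in (0:ℝ)..t, K x s * P (t - s)) - P t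
      = (∫ s in (0:ℝ)..δ, K x s * (P (t - s) - P t))
        + (∫ s in δ..t, K x s * (P (t - s) - P t))
        + P t * ((∫ s in (0:ℝ)..t, K x s) - 1) := by
    have e1 := intervalIntegral.integral_add_adjacent_intervals hintJ1 hintJ2
    have e2 : ∫ s in (0:ℝ)..t, K x s * (P (t - s) - P t)
        = (∫ s in (0:ℝ)..t, K x s * P (t - s)) - (∫ s in (0:ℝ)..t, K x s) * P t := by
      rw [← intervalIntegral.integral_mul_const,
        ← intervalIntegral.integral_sub hintKP (hintK.mul_const _)]
      congr 1
      funext s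
      ring
    rw [e1, e2]
    ring
  -- bound A
  have hA : |∫ s in (0:ℝ)..δ, K x s * (P (t - s) - P t)| ≤ ε/4 := by
    have hbd : ∀ s ∈ Set.uIoc (0:ℝ) δ, ‖K x s * (P (t - s) - P t)‖ ≤ K x s * (ε/4) := by
      intro s hs
      rw [Set.uIoc_of_le hδpos.le] at hs
      have hs0 : 0 < s := hs.1
      have hsδ : s ≤ δ := hs.2
      have hmem1 : t - s ∈ Set.Icc (0:ℝ) T := ⟨by linarith, by linarith⟩
      have hmem2 : t ∈ Set.Icc (0:ℝ) T := ⟨ht0.le, htT⟩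
      have hdist : dist (t - s) t < δ₀ := by
        rw [Real.dist_eq]
        rw [show t - s - t = -s by ring, abs_neg, abs_of_pos hs0]
        linarith
      have hPd : |P (t - s) - P t| ≤ ε/4 := by
        have := hucont (t - s) hmem1 t hmem2 hdist
        rw [Real.dist_eq] at this
        linarith
      rw [Real.norm_eq_abs, abs_mul, abs_of_nonneg (K_nonneg hx.le s)]
      exact mul_le_mul_of_nonneg_left hPd (K_nonneg hx.le s)
    have h1 : ‖∫ s in (0:ℝ)..δ, K x s * (P (t - s) - P t)‖
        ≤ |∫ s in (0:ℝ)..δ, K x s * (ε/4)| := by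
      apply intervalIntegral.norm_integral_le_abs_of_norm_le _ (hintKd.mul_const _)
      exact (MeasureTheory.ae_restrict_iff' measurableSet_uIoc).2
        (Filter.Eventually.of_forall hbd)
    have hg0 : (0:ℝ) ≤ ∫ s in (0:ℝ)..δ, K x s * (ε/4) :=
      intervalIntegral.integral_nonneg hδpos.le
        (fun s _ => mul_nonneg (K_nonneg hx.le s) (by positivity))
    rw [Real.norm_eq_abs, abs_of_nonneg hg0] at h1
    have h2 : (∫ s in (0:ℝ)..δ, K x s * (ε/4)) = (∫ s in (0:ℝ)..δ, K x s) * (ε/4) :=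
      intervalIntegral.integral_mul_const _ _
    have h3 : (∫ s in (0:ℝ)..δ, K x s) ≤ 1 := by
      rw [intK hx hδpos]
      have hE0 : 0 ≤ E (x / (2 * Real.sqrt δ)) := E_nonneg (by positivity)
      nlinarith [div_pos (by norm_num : (0:ℝ) < 2) hπ]
    have h4 : (0:ℝ) ≤ ∫ s in (0:ℝ)..δ, K x s :=
      intervalIntegral.integral_nonneg hδpos.le (fun s _ => K_nonneg hx.le s)
    calc |∫ s in (0:ℝ)..δ, K x s * (P (t - s) - P t)|
        ≤ (∫ s in (0:ℝ)..δ, K x s) * (ε/4) := by rw [← h2]; exact h1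
      _ ≤ 1 * (ε/4) := mul_le_mul_of_nonneg_right h3 (by positivity)
      _ = ε/4 := one_mul _
  -- bound B
  have hB : |∫ s in δ..t, K x s * (P (t - s) - P t)| ≤ ε/4 := by
    have hbd : ∀ s ∈ Set.uIoc δ t, ‖K x s * (P (t - s) - P t)‖
        ≤ x / (2 * Real.sqrt π * (δ * Real.sqrt δ)) * (2*M) := by
      intro s hs
      rw [Set.uIoc_of_le hδt.le] at hs
      have hs0 : 0 < s := lt_trans hδpos hs.1
      have hKb : K x s ≤ x / (2 * Real.sqrt π * (δ * Real.sqrt δ)) := by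
        rw [K_pos_eq hs0]
        have hss : 0 < Real.sqrt s := Real.sqrt_pos.2 hs0
        have hmono : δ * Real.sqrt δ ≤ s * Real.sqrt s :=
          mul_le_mul hs.1.le (Real.sqrt_le_sqrt hs.1.le) hδs.le hs0.le
        have hexp : Real.exp (-x^2 / (4*s)) ≤ 1 := by
          rw [Real.exp_le_one_iff, neg_div]
          exact neg_nonpos.2 (by positivity)
        calc x / (2 * Real.sqrt π * (s * Real.sqrt s)) * Real.exp (-x^2 / (4*s))
            ≤ x / (2 * Real.sqrt π * (s * Real.sqrt s)) * 1 :=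
              mul_le_mul_of_nonneg_left hexp (by positivity)
          _ = x / (2 * Real.sqrt π * (s * Real.sqrt s)) := mul_one _
          _ ≤ x / (2 * Real.sqrt π * (δ * Real.sqrt δ)) := by
              apply div_le_div_of_nonneg_left hx.le (by positivity)
              apply mul_le_mul_of_nonneg_left hmono (by positivity)
      have hPd : |P (t - s) - P t| ≤ 2*M := by
        have h1 : |P (t - s)| ≤ M := hMb _ ⟨by linarith [hs.2], by linarith [hs.1, hδpos]⟩
        have h2 : |P t| ≤ M := hMb _ ⟨ht0.le, htT⟩
        calc |P (t - s) - P t| ≤ |P (t - s)| + |P t| := abs_sub _ _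
          _ ≤ 2*M := by linarith
      rw [Real.norm_eq_abs, abs_mul, abs_of_nonneg (K_nonneg hx.le s)]
      exact mul_le_mul hKb hPd (abs_nonneg _) (by positivity)
    have h1 := intervalIntegral.norm_integral_le_of_norm_le_const hbd
    rw [Real.norm_eq_abs] at h1
    have h2 : x / (2 * Real.sqrt π * (δ * Real.sqrt δ)) * (2*M) * |t - δ| ≤ x * C₁ := by
      have hd : (0:ℝ) < 2 * Real.sqrt π * (δ * Real.sqrt δ) := by positivity
      rw [abs_of_pos (by linarith : (0:ℝ) < t - δ)]
      have e : x / (2 * Real.sqrt π * (δ * Real.sqrt δ)) * (2*M) * (t - δ)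
          = x * (2*M) * (t - δ) / (2 * Real.sqrt π * (δ * Real.sqrt δ)) := by ring
      have hkey : x * C₁ * (2 * Real.sqrt π * (δ * Real.sqrt δ))
          = x * (t * (2*M)) + x * (2 * Real.sqrt π * (δ * Real.sqrt δ)) := by
        rw [hC₁def]
        field_simp
      rw [e, div_le_iff₀ hd, hkey]
      nlinarith [mul_pos hx hM, mul_pos hx hd, mul_pos (mul_pos hx hM) hδpos]
    have h3 : x * C₁ < ε/4 := (lt_div_iff₀ hC₁pos).1 hx1
    linarith
  -- bound C
  have hC : |P t * ((∫ s in (0:ℝ)..t, K x s) - 1)| ≤ ε/4 := by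
    rw [intK hx ht0]
    have harg : 0 ≤ x / (2 * Real.sqrt t) := by positivity
    have hE0 : 0 ≤ E (x / (2 * Real.sqrt t)) := E_nonneg harg
    have hEle : E (x / (2 * Real.sqrt t)) ≤ x / (2 * Real.sqrt t) := E_le harg
    have h1 : |1 - 2 / Real.sqrt π * E (x / (2 * Real.sqrt t)) - 1|
        = 2 / Real.sqrt π * E (x / (2 * Real.sqrt t)) := by
      rw [show (1:ℝ) - 2 / Real.sqrt π * E (x / (2 * Real.sqrt t)) - 1
          = -(2 / Real.sqrt π * E (x / (2 * Real.sqrt t))) by ring, abs_neg]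
      exact abs_of_nonneg (by positivity)
    rw [abs_mul, h1]
    have h2 : 2 / Real.sqrt π * E (x / (2 * Real.sqrt t))
        ≤ 2 / Real.sqrt π * (x / (2 * Real.sqrt t)) :=
      mul_le_mul_of_nonneg_left hEle (by positivity)
    have h3 : |P t| ≤ M := hMb _ ⟨ht0.le, htT⟩
    have h4 : |P t| * (2 / Real.sqrt π * E (x / (2 * Real.sqrt t)))
        ≤ M * (2 / Real.sqrt π * (x / (2 * Real.sqrt t))) :=
      mul_le_mul h3 (le_trans h2 le_rfl) (by positivity) hM.le
    have h5 : M * (2 / Real.sqrt π * (x / (2 * Real.sqrt t))) = x * C₂ := by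
      rw [hC₂def]
      field_simp
    have h6 : x * C₂ < ε/4 := (lt_div_iff₀ hC₂pos).1 hx2
    linarith
  -- conclude
  rw [Real.dist_eq, hdecomp]
  calc |(∫ s in (0:ℝ)..δ, K x s * (P (t - s) - P t))
        + (∫ s in δ..t, K x s * (P (t - s) - P t))
        + P t * ((∫ s in (0:ℝ)..t, K x s) - 1)|
      ≤ |(∫ s in (0:ℝ)..δ, K x s * (P (t - s) - P t))
        + (∫ s in δ..t, K x s * (P (t - s) - P t))|
        + |P t * ((∫ s in (0:ℝ)..t, K x s) - 1)| := abs_add_le _ _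
    _ ≤ |∫ s in (0:ℝ)..δ, K x s * (P (t - s) - P t)|
        + |∫ s in δ..t, K x s * (P (t - s) - P t)|
        + |P t * ((∫ s in (0:ℝ)..t, K x s) - 1)| := by
          have := abs_add_le (∫ s in (0:ℝ)..δ, K x s * (P (t - s) - P t))
            (∫ s in δ..t, K x s * (P (t - s) - P t))
          linarith
    _ < ε := by linarith
end

section
/- For K(x,t) = x/(2√π t^{3/2}) e^{−x²/(4t)}, the semigroup (reproducing) property ∫_{t'}^{t} K(x'−x, t−τ) K(x−z, τ−t') dτ = K(x'−z, t−t') holds for all x' > x > z and t > t'. -/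
open Set intervalIntegral Real

namespace KAux

open MeasureTheory

lemma rpow_3_2 {w : ℝ} (hw : 0 < w) : w ^ ((3:ℝ)/2) = w * Real.sqrt w := by
  rw [show ((3:ℝ)/2) = 1 + 1/2 by norm_num, Real.rpow_add hw, Real.rpow_one,
    Real.sqrt_eq_rpow]

variable {a b s : ℝ}

lemma hasDeriv_sub_div (ha : 0 < a) (hb : 0 < b) :
    ∀ σ ∈ Ioi (0:ℝ), HasDerivWithinAt (fun σ : ℝ => a * σ - b / σ)
      (a + b / σ ^ 2) (Ioi 0) σ := by
  intro σ hσ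
  have hσ0 : σ ≠ 0 := ne_of_gt hσ
  have h1 : HasDerivAt (fun σ : ℝ => a * σ - b / σ)
      (a * 1 - (0 * σ - b * 1) / σ ^ 2) σ :=
    ((hasDerivAt_id σ).const_mul a).sub ((hasDerivAt_const σ b).div (hasDerivAt_id σ) hσ0)
  have : a * 1 - (0 * σ - b * 1) / σ ^ 2 = a + b / σ ^ 2 := by field_simp; ring
  rw [this] at h1
  exact h1.hasDerivWithinAt

lemma injOn_sub_div (ha : 0 < a) (hb : 0 < b) :
    InjOn (fun σ : ℝ => a * σ - b / σ) (Ioi 0) := by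
  have h : StrictMonoOn (fun σ : ℝ => a * σ - b / σ) (Ioi 0) := by
    intro p hp q hq hpq
    have h1 : a * p < a * q := (mul_lt_mul_iff_right₀ ha).2 hpq
    have h2 : b / q < b / p := div_lt_div_of_pos_left hb hp hpq
    simp only
    linarith
  exact h.injOn

lemma image_sub_div (ha : 0 < a) (hb : 0 < b) :
    (fun σ : ℝ => a * σ - b / σ) '' Ioi 0 = univ := by
  apply eq_univ_of_forall
  intro y
  have h4 : 0 < y ^ 2 + 4 * (a * b) := by positivity
  set r := Real.sqrt (y ^ 2 + 4 * (a * b)) with hr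
  have hr2 : r ^ 2 = y ^ 2 + 4 * (a * b) := Real.sq_sqrt h4.le
  have hry : |y| < r := by
    have h5 : Real.sqrt (y ^ 2) < r := by
      apply Real.sqrt_lt_sqrt (sq_nonneg y)
      nlinarith
    rwa [Real.sqrt_sq_eq_abs] at h5
  have hy1 : 0 < y + r := by
    have := neg_le_abs y
    linarith
  have hσ : 0 < (y + r) / (2 * a) := by positivity
  refine ⟨(y + r) / (2 * a), hσ, ?_⟩
  have hne : (y + r) / (2 * a) ≠ 0 := ne_of_gt hσ
  simp only
  field_simp
  linear_combination hr2


lemma gauss_exp_eq (s : ℝ) :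
    (fun y : ℝ => Real.exp (-y ^ 2 / (4 * s))) =
      fun y : ℝ => Real.exp (-(1 / (4 * s)) * y ^ 2) := by
  funext y; congr 1; ring

lemma gauss_total (ha : 0 < a) (hb : 0 < b) (hs : 0 < s) :
    ∫ σ in Ioi (0:ℝ), (a + b / σ ^ 2) * Real.exp (-(a * σ - b / σ) ^ 2 / (4 * s))
      = 2 * Real.sqrt (π * s) := by
  have key := integral_image_eq_integral_abs_deriv_smul measurableSet_Ioi
    (hasDeriv_sub_div ha hb) (injOn_sub_div ha hb)
    (fun y => Real.exp (-y ^ 2 / (4 * s)))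
  rw [image_sub_div ha hb] at key
  calc ∫ σ in Ioi (0:ℝ), (a + b / σ ^ 2) * Real.exp (-(a * σ - b / σ) ^ 2 / (4 * s))
      = ∫ σ in Ioi (0:ℝ), |a + b / σ ^ 2| •
          Real.exp (-(a * σ - b / σ) ^ 2 / (4 * s)) := by
        apply setIntegral_congr_fun measurableSet_Ioi
        intro σ hσ
        have hσ0 : (0:ℝ) < σ := hσ
        have hpos : 0 < a + b / σ ^ 2 := by positivity
        simp only [smul_eq_mul, abs_of_pos hpos]
    _ = ∫ y in univ, Real.exp (-y ^ 2 / (4 * s)) := key.symm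
    _ = 2 * Real.sqrt (π * s) := by
        rw [Measure.restrict_univ, gauss_exp_eq, integral_gaussian,
          div_div_eq_mul_div, div_one,
          show π * (4 * s) = 2 ^ 2 * (π * s) by ring,
          Real.sqrt_mul (by norm_num : (0:ℝ) ≤ 2 ^ 2),
          Real.sqrt_sq (by norm_num : (0:ℝ) ≤ 2)]

lemma integrable_total (ha : 0 < a) (hb : 0 < b) (hs : 0 < s) :
    IntegrableOn (fun σ : ℝ => (a + b / σ ^ 2) *
      Real.exp (-(a * σ - b / σ) ^ 2 / (4 * s))) (Ioi 0) := by
  have key := (integrableOn_image_iff_integrableOn_abs_deriv_smul measurableSet_Ioi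
    (hasDeriv_sub_div ha hb) (injOn_sub_div ha hb)
    (fun y => Real.exp (-y ^ 2 / (4 * s)))).mp
  rw [image_sub_div ha hb] at key
  have hint : IntegrableOn (fun y : ℝ => Real.exp (-y ^ 2 / (4 * s))) univ := by
    rw [gauss_exp_eq]
    exact (integrable_exp_neg_mul_sq (by positivity : (0:ℝ) < 1 / (4 * s))).integrableOn
  refine (key hint).congr_fun ?_ measurableSet_Ioi
  intro σ hσ
  have hσ0 : (0:ℝ) < σ := hσ
  have hpos : 0 < a + b / σ ^ 2 := by positivity
  simp only [smul_eq_mul, abs_of_pos hpos]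


lemma contOn_gauss (ha : 0 < a) (hb : 0 < b) (hs : 0 < s) :
    ContinuousOn (fun σ : ℝ => Real.exp (-(a * σ - b / σ) ^ 2 / (4 * s))) (Ioi 0) := by
  apply Real.continuous_exp.comp_continuousOn
  apply ContinuousOn.div_const
  apply ContinuousOn.neg
  apply ContinuousOn.pow
  exact (continuousOn_const.mul continuousOn_id).sub
    (continuousOn_const.div continuousOn_id (fun σ hσ => ne_of_gt hσ))

lemma integrable_piece1 (ha : 0 < a) (hb : 0 < b) (hs : 0 < s) :
    IntegrableOn (fun σ : ℝ => a *
      Real.exp (-(a * σ - b / σ) ^ 2 / (4 * s))) (Ioi 0) := by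
  apply Integrable.mono' (integrable_total ha hb hs)
  · exact (continuousOn_const.mul (contOn_gauss ha hb hs)).aestronglyMeasurable
      measurableSet_Ioi
  · rw [ae_restrict_iff' measurableSet_Ioi]
    apply ae_of_all
    intro σ hσ
    have hσ0 : (0:ℝ) < σ := hσ
    have he : 0 < Real.exp (-(a * σ - b / σ) ^ 2 / (4 * s)) := Real.exp_pos _
    rw [Real.norm_eq_abs, abs_of_pos (by positivity)]
    have : a ≤ a + b / σ ^ 2 := le_add_of_nonneg_right (by positivity)
    nlinarith

lemma integrable_piece2 (ha : 0 < a) (hb : 0 < b) (hs : 0 < s) :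
    IntegrableOn (fun σ : ℝ => (b / σ ^ 2) *
      Real.exp (-(a * σ - b / σ) ^ 2 / (4 * s))) (Ioi 0) := by
  apply Integrable.mono' (integrable_total ha hb hs)
  · apply ContinuousOn.aestronglyMeasurable _ measurableSet_Ioi
    exact (continuousOn_const.div (continuousOn_id.pow 2)
      (fun σ hσ => pow_ne_zero 2 (ne_of_gt hσ))).mul (contOn_gauss ha hb hs)
  · rw [ae_restrict_iff' measurableSet_Ioi]
    apply ae_of_all
    intro σ hσ
    have hσ0 : (0:ℝ) < σ := hσ
    have he : 0 < Real.exp (-(a * σ - b / σ) ^ 2 / (4 * s)) := Real.exp_pos _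
    rw [Real.norm_eq_abs, abs_of_pos (by positivity)]
    have : b / σ ^ 2 ≤ a + b / σ ^ 2 := le_add_of_nonneg_left ha.le
    nlinarith

lemma gauss_swap (ha : 0 < a) (hb : 0 < b) (hs : 0 < s) :
    ∫ σ in Ioi (0:ℝ), a * Real.exp (-(a * σ - b / σ) ^ 2 / (4 * s))
      = ∫ σ in Ioi (0:ℝ), (b / σ ^ 2) * Real.exp (-(a * σ - b / σ) ^ 2 / (4 * s)) := by
  have hderiv : ∀ σ ∈ Ioi (0:ℝ), HasDerivWithinAt (fun σ : ℝ => b / (a * σ))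
      (-(b / (a * σ ^ 2))) (Ioi 0) σ := by
    intro σ hσ
    have hσ0 : σ ≠ 0 := ne_of_gt hσ
    have h1 : HasDerivAt (fun σ : ℝ => b / (a * σ))
        ((0 * (a * σ) - b * (a * 1)) / (a * σ) ^ 2) σ :=
      (hasDerivAt_const σ b).div ((hasDerivAt_id σ).const_mul a)
        (by positivity)
    have h2 : (0 * (a * σ) - b * (a * 1)) / (a * σ) ^ 2 = -(b / (a * σ ^ 2)) := by
      field_simp
      ring
    rw [h2] at h1
    exact h1.hasDerivWithinAt
  have hinj : InjOn (fun σ : ℝ => b / (a * σ)) (Ioi 0) := by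
    intro p hp q hq h
    have hp0 : (0:ℝ) < p := hp
    have hq0 : (0:ℝ) < q := hq
    simp only at h
    field_simp at h
    exact h.symm
  have himg : (fun σ : ℝ => b / (a * σ)) '' Ioi 0 = Ioi 0 := by
    ext τ
    constructor
    · rintro ⟨σ, hσ, rfl⟩
      have hσ0 : (0:ℝ) < σ := hσ
      exact mem_Ioi.2 (by positivity)
    · intro hτ
      have hτ0 : (0:ℝ) < τ := hτ
      refine ⟨b / (a * τ), mem_Ioi.2 (by positivity), ?_⟩
      field_simp
  have key := integral_image_eq_integral_abs_deriv_smul measurableSet_Ioi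
    hderiv hinj (fun σ => a * Real.exp (-(a * σ - b / σ) ^ 2 / (4 * s)))
  rw [himg] at key
  rw [key]
  apply setIntegral_congr_fun measurableSet_Ioi
  intro σ hσ
  have hσ0 : (0:ℝ) < σ := hσ
  have e1 : a * (b / (a * σ)) = b / σ := by
    field_simp
  have e2 : b / (b / (a * σ)) = a * σ := by
    rw [div_div_eq_mul_div]
    field_simp
  simp only [smul_eq_mul]
  rw [e1, e2, abs_neg, abs_of_pos (by positivity : 0 < b / (a * σ ^ 2)),
    show (b / σ - a * σ) ^ 2 = (a * σ - b / σ) ^ 2 by ring]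
  field_simp


lemma eK1 {σ : ℝ} (ha : 0 < a) (hs : 0 < s) (hσ0 : 0 < σ) :
    K a (s - s * σ ^ 2 / (1 + σ ^ 2)) =
      a * (Real.sqrt (1 + σ ^ 2) * (1 + σ ^ 2)) / (2 * Real.sqrt π * (s * Real.sqrt s)) *
        Real.exp (-(a ^ 2 * (1 + σ ^ 2)) / (4 * s)) := by
  have hu : (0:ℝ) < 1 + σ ^ 2 := by positivity
  have h1 : s - s * σ ^ 2 / (1 + σ ^ 2) = s / (1 + σ ^ 2) := by
    field_simp
    ring
  have ht : (0:ℝ) < s / (1 + σ ^ 2) := by positivity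
  rw [h1, K, if_pos ht, rpow_3_2 ht, Real.sqrt_div hs.le]
  have hU : (0:ℝ) < Real.sqrt (1 + σ ^ 2) := Real.sqrt_pos.2 hu
  have hS : (0:ℝ) < Real.sqrt s := Real.sqrt_pos.2 hs
  have hP : (0:ℝ) < Real.sqrt π := Real.sqrt_pos.2 pi_pos
  congr 1
  · rw [div_eq_div_iff (by positivity) (by positivity)]
    field_simp
  · congr 1
    rw [div_eq_div_iff (by positivity) (by positivity)]
    field_simp

lemma eK2 {σ : ℝ} (hb : 0 < b) (hs : 0 < s) (hσ0 : 0 < σ) :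
    K b (s * σ ^ 2 / (1 + σ ^ 2)) =
      b * (Real.sqrt (1 + σ ^ 2) * (1 + σ ^ 2)) /
          (2 * Real.sqrt π * (s * Real.sqrt s) * σ ^ 3) *
        Real.exp (-(b ^ 2 * (1 + σ ^ 2)) / (4 * s * σ ^ 2)) := by
  have hu : (0:ℝ) < 1 + σ ^ 2 := by positivity
  have ht : (0:ℝ) < s * σ ^ 2 / (1 + σ ^ 2) := by positivity
  have h1 : s * σ ^ 2 / (1 + σ ^ 2) = σ ^ 2 * (s / (1 + σ ^ 2)) := by ring
  rw [K, if_pos ht, rpow_3_2 ht, h1, Real.sqrt_mul (sq_nonneg σ),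
    Real.sqrt_sq hσ0.le, Real.sqrt_div hs.le]
  have hU : (0:ℝ) < Real.sqrt (1 + σ ^ 2) := Real.sqrt_pos.2 hu
  have hS : (0:ℝ) < Real.sqrt s := Real.sqrt_pos.2 hs
  have hP : (0:ℝ) < Real.sqrt π := Real.sqrt_pos.2 pi_pos
  congr 1
  · rw [div_eq_div_iff (by positivity) (by positivity)]
    field_simp
  · congr 1
    rw [div_eq_div_iff (by positivity) (by positivity)]
    field_simp

lemma key (ha : 0 < a) (hb : 0 < b) (hs : 0 < s) :
    ∫ τ in Ioo (0:ℝ) s, K a (s - τ) * K b τ = K (a + b) s := by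
  have himg : (fun σ : ℝ => s * σ ^ 2 / (1 + σ ^ 2)) '' Ioi 0 = Ioo 0 s := by
    ext τ
    constructor
    · rintro ⟨σ, hσ, rfl⟩
      have hσ0 : (0:ℝ) < σ := hσ
      have hu : (0:ℝ) < 1 + σ ^ 2 := by positivity
      refine ⟨by positivity, ?_⟩
      rw [div_lt_iff₀ hu]
      nlinarith
    · rintro ⟨hτ1, hτ2⟩
      have hst : (0:ℝ) < s - τ := by linarith
      have hd : (0:ℝ) < τ / (s - τ) := div_pos hτ1 hst
      refine ⟨Real.sqrt (τ / (s - τ)), mem_Ioi.2 (Real.sqrt_pos.2 hd), ?_⟩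
      simp only
      rw [Real.sq_sqrt hd.le]
      field_simp
      ring
  have hderiv : ∀ σ ∈ Ioi (0:ℝ), HasDerivWithinAt (fun σ : ℝ => s * σ ^ 2 / (1 + σ ^ 2))
      (2 * s * σ / (1 + σ ^ 2) ^ 2) (Ioi 0) σ := by
    intro σ hσ
    have hu : (0:ℝ) < 1 + σ ^ 2 := by positivity
    have h1 := HasDerivAt.div ((hasDerivAt_pow 2 σ).const_mul s)
      ((hasDerivAt_pow 2 σ).const_add 1) hu.ne'
    apply HasDerivAt.hasDerivWithinAt
    convert h1 using 1
    · rfl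
    · rfl
    · push_cast
      ring
  have hinj : InjOn (fun σ : ℝ => s * σ ^ 2 / (1 + σ ^ 2)) (Ioi 0) := by
    intro p hp q hq h
    have hp0 : (0:ℝ) < p := hp
    have hq0 : (0:ℝ) < q := hq
    have hup : (0:ℝ) < 1 + p ^ 2 := by positivity
    have huq : (0:ℝ) < 1 + q ^ 2 := by positivity
    simp only at h
    field_simp at h
    have h2 : s * (p ^ 2 - q ^ 2) = 0 := by linear_combination s * h
    have hpq2 : p ^ 2 = q ^ 2 := by
      rcases mul_eq_zero.mp h2 with h3 | h3
      · exact absurd h3 hs.ne'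
      · linarith
    rw [← Real.sqrt_sq hp0.le, ← Real.sqrt_sq hq0.le, hpq2]
  have hpt : EqOn
      (fun σ : ℝ => |2 * s * σ / (1 + σ ^ 2) ^ 2| •
        (K a (s - s * σ ^ 2 / (1 + σ ^ 2)) * K b (s * σ ^ 2 / (1 + σ ^ 2))))
      (fun σ : ℝ =>
        (b * Real.exp (-(a + b) ^ 2 / (4 * s)) / (2 * π * s ^ 2)) *
          (a * Real.exp (-(a * σ - b / σ) ^ 2 / (4 * s))) +
        (a * Real.exp (-(a + b) ^ 2 / (4 * s)) / (2 * π * s ^ 2)) *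
          ((b / σ ^ 2) * Real.exp (-(a * σ - b / σ) ^ 2 / (4 * s)))) (Ioi 0) := by
    intro σ hσ
    have hσ0 : (0:ℝ) < σ := hσ
    have hu : (0:ℝ) < 1 + σ ^ 2 := by positivity
    have hU : (0:ℝ) < Real.sqrt (1 + σ ^ 2) := Real.sqrt_pos.2 hu
    have hS : (0:ℝ) < Real.sqrt s := Real.sqrt_pos.2 hs
    have hP : (0:ℝ) < Real.sqrt π := Real.sqrt_pos.2 pi_pos
    have hU2 : Real.sqrt (1 + σ ^ 2) ^ 2 = 1 + σ ^ 2 := Real.sq_sqrt hu.le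
    have hS2 : Real.sqrt s ^ 2 = s := Real.sq_sqrt hs.le
    have hP2 : Real.sqrt π ^ 2 = π := Real.sq_sqrt pi_pos.le
    simp only [smul_eq_mul]
    rw [eK1 ha hs hσ0, eK2 hb hs hσ0,
      abs_of_pos (show (0:ℝ) < 2 * s * σ / (1 + σ ^ 2) ^ 2 by positivity)]
    have hexp : Real.exp (-(a ^ 2 * (1 + σ ^ 2)) / (4 * s)) *
        Real.exp (-(b ^ 2 * (1 + σ ^ 2)) / (4 * s * σ ^ 2)) =
        Real.exp (-(a + b) ^ 2 / (4 * s)) *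
          Real.exp (-(a * σ - b / σ) ^ 2 / (4 * s)) := by
      rw [← Real.exp_add, ← Real.exp_add]
      congr 1
      field_simp
      ring
    have hcoef : (2 * s * σ / (1 + σ ^ 2) ^ 2) *
        (a * (Real.sqrt (1 + σ ^ 2) * (1 + σ ^ 2)) / (2 * Real.sqrt π * (s * Real.sqrt s))) *
        (b * (Real.sqrt (1 + σ ^ 2) * (1 + σ ^ 2)) /
          (2 * Real.sqrt π * (s * Real.sqrt s) * σ ^ 3)) =
        a * b * (1 + σ ^ 2) / (2 * π * s ^ 2 * σ ^ 2) := by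
      set U := Real.sqrt (1 + σ ^ 2) with hUdef
      set S := Real.sqrt s with hSdef
      set P := Real.sqrt π with hPdef
      rw [← hP2, ← hS2, ← hU2]
      field_simp
    calc (2 * s * σ / (1 + σ ^ 2) ^ 2) *
        ((a * (Real.sqrt (1 + σ ^ 2) * (1 + σ ^ 2)) / (2 * Real.sqrt π * (s * Real.sqrt s)) *
          Real.exp (-(a ^ 2 * (1 + σ ^ 2)) / (4 * s))) *
         (b * (Real.sqrt (1 + σ ^ 2) * (1 + σ ^ 2)) /
            (2 * Real.sqrt π * (s * Real.sqrt s) * σ ^ 3) *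
          Real.exp (-(b ^ 2 * (1 + σ ^ 2)) / (4 * s * σ ^ 2))))
        = ((2 * s * σ / (1 + σ ^ 2) ^ 2) *
            (a * (Real.sqrt (1 + σ ^ 2) * (1 + σ ^ 2)) / (2 * Real.sqrt π * (s * Real.sqrt s))) *
            (b * (Real.sqrt (1 + σ ^ 2) * (1 + σ ^ 2)) /
              (2 * Real.sqrt π * (s * Real.sqrt s) * σ ^ 3))) *
          (Real.exp (-(a ^ 2 * (1 + σ ^ 2)) / (4 * s)) *
            Real.exp (-(b ^ 2 * (1 + σ ^ 2)) / (4 * s * σ ^ 2))) := by ring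
      _ = (a * b * (1 + σ ^ 2) / (2 * π * s ^ 2 * σ ^ 2)) *
          (Real.exp (-(a + b) ^ 2 / (4 * s)) *
            Real.exp (-(a * σ - b / σ) ^ 2 / (4 * s))) := by rw [hcoef, hexp]
      _ = (b * Real.exp (-(a + b) ^ 2 / (4 * s)) / (2 * π * s ^ 2)) *
            (a * Real.exp (-(a * σ - b / σ) ^ 2 / (4 * s))) +
          (a * Real.exp (-(a + b) ^ 2 / (4 * s)) / (2 * π * s ^ 2)) *
            ((b / σ ^ 2) * Real.exp (-(a * σ - b / σ) ^ 2 / (4 * s))) := by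
          field_simp
          ring
  have hsum : (∫ σ in Ioi (0:ℝ), a * Real.exp (-(a * σ - b / σ) ^ 2 / (4 * s))) +
      (∫ σ in Ioi (0:ℝ), (b / σ ^ 2) * Real.exp (-(a * σ - b / σ) ^ 2 / (4 * s))) =
      2 * Real.sqrt (π * s) := by
    rw [← integral_add (integrable_piece1 ha hb hs) (integrable_piece2 ha hb hs),
      ← gauss_total ha hb hs]
    apply setIntegral_congr_fun measurableSet_Ioi
    intro σ hσ
    simp only
    ring
  have hswap := gauss_swap ha hb hs
  have hv1 : ∫ σ in Ioi (0:ℝ), a * Real.exp (-(a * σ - b / σ) ^ 2 / (4 * s))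
      = Real.sqrt (π * s) := by linarith
  have hv2 : ∫ σ in Ioi (0:ℝ), (b / σ ^ 2) * Real.exp (-(a * σ - b / σ) ^ 2 / (4 * s))
      = Real.sqrt (π * s) := by linarith
  rw [← himg, integral_image_eq_integral_abs_deriv_smul measurableSet_Ioi hderiv hinj,
    setIntegral_congr_fun measurableSet_Ioi hpt,
    integral_add ((integrable_piece1 ha hb hs).const_mul _)
      ((integrable_piece2 ha hb hs).const_mul _),
    MeasureTheory.integral_const_mul, hv1, MeasureTheory.integral_const_mul, hv2]
  rw [K, if_pos hs, rpow_3_2 hs, Real.sqrt_mul pi_pos.le]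
  have hS : (0:ℝ) < Real.sqrt s := Real.sqrt_pos.2 hs
  have hP : (0:ℝ) < Real.sqrt π := Real.sqrt_pos.2 pi_pos
  have hS2 : Real.sqrt s ^ 2 = s := Real.sq_sqrt hs.le
  have hP2 : Real.sqrt π ^ 2 = π := Real.sq_sqrt pi_pos.le
  field_simp
  linear_combination ((a + b) * Real.sqrt s ^ 2) * hP2 +
    ((a + b) * π) * hS2

end KAux

theorem K_semigroup (x' x z t t' : ℝ) (h1 : x < x') (h2 : z < x) (h3 : t' < t) :
    ∫ τ in t'..t, K (x' - x) (t - τ) * K (x - z) (τ - t') = K (x' - z) (t - t') := by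
  have hs : 0 < t - t' := sub_pos.2 h3
  have ha : 0 < x' - x := sub_pos.2 h1
  have hb : 0 < x - z := sub_pos.2 h2
  have h0 : ∫ τ in t'..t, K (x' - x) (t - τ) * K (x - z) (τ - t')
      = ∫ τ in t'..t, (fun u => K (x' - x) ((t - t') - u) * K (x - z) u) (τ - t') := by
    apply intervalIntegral.integral_congr
    intro τ _
    simp only
    rw [show (t - t') - (τ - t') = t - τ by ring]
  rw [h0, intervalIntegral.integral_comp_sub_right
      (fun u => K (x' - x) ((t - t') - u) * K (x - z) u) t', sub_self,
    intervalIntegral.integral_of_le hs.le, MeasureTheory.integral_Ioc_eq_integral_Ioo,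
    show x' - z = (x' - x) + (x - z) by ring]
  exact KAux.key ha hb hs
end
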